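/- Let d, m ∈ ℕ. Let p₀ : ℝ^d × ℝ^m → ℝ be a measurable, strictly positive joint probability density (with respect to Lebesgue measure), and let k : ℝ^d × ℝ^d → ℝ be a measurable, strictly positive transition density that is differentiable in its first argument, with p(x,y) = ∫_{ℝ^d} k(x,x₀) p₀(x₀,y) dx₀ and ∇_x p(x,y) = ∫ ∇_x k(x,x₀) p₀(x₀,y) dx₀ for all (x,y). Define s*(x,y) = ∇_x log p(x,y). Then for every measurable s : ℝ^d × ℝ^m → ℝ^d for which all integrals below are finite, the denoising loss satisfies the Pythagorean identity ∭ ‖∇_x log k(x,x₀) − s(x,y)‖² k(x,x₀) p₀(x₀,y) dx₀ dx dy = ∭ ‖∇_x log k(x,x₀) − s*(x,y)‖² k(x,x₀) p₀(x₀,y) dx₀ dx dy + ∬ ‖s*(x,y) − s(x,y)‖² p(x,y) dx dy; in particular s* minimizes the denoising loss over all such s. -/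

import Mathlib

set_option maxHeartbeats 1000000

open MeasureTheory Metric Set Filter Pointwise Topology Asymptotics
open scoped RealInnerProductSpace ENNReal

section AuxDensity
variable {E : Type*} [NormedAddCommGroup E] [InnerProductSpace ℝ E] [FiniteDimensional ℝ E]
    [MeasurableSpace E] [BorelSpace E] (μ : Measure E) [μ.IsAddHaarMeasure]

theorem levelset_fderiv_ae_zero (f : E → ℝ) :
    μ {x | f x = 0 ∧ DifferentiableAt ℝ f x ∧ fderiv ℝ f x ≠ 0} = 0 := by
  set S := {x | f x = 0 ∧ DifferentiableAt ℝ f x ∧ fderiv ℝ f x ≠ 0} with hS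
  have key : ∀ x ∈ S,
      ¬ Tendsto (fun r => μ (S ∩ closedBall x r) / μ (closedBall x r)) (𝓝[>] 0) (𝓝 1) := by
    intro x hx
    obtain ⟨hf0, hdiff, hne⟩ := hx
    set b := fderiv ℝ f x with hb
    set v : E := (InnerProductSpace.toDual ℝ E).symm b with hv
    have hv0 : v ≠ 0 := by
      simp only [hv, ne_eq, EmbeddingLike.map_eq_zero_iff]; exact hne
    have hnv : 0 < ‖v‖ := norm_pos_iff.mpr hv0
    have hbv : ∀ z, b z = ⟪v, z⟫ := fun z => (InnerProductSpace.toDual_symm_apply).symm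
    -- the cone
    set C : Set E := {z | ‖v‖ / 4 * ‖z‖ < ⟪v, z⟫} with hC
    have hCopen : IsOpen C :=
      isOpen_lt (continuous_const.mul continuous_norm) (continuous_const.inner continuous_id)
    have hCcone : ∀ {t : ℝ}, 0 < t → ∀ {z : E}, t • z ∈ C ↔ z ∈ C := by
      intro t ht z
      simp only [hC, mem_setOf_eq, norm_smul, real_inner_smul_right, Real.norm_eq_abs,
        abs_of_pos ht]
      rw [← mul_assoc, mul_comm (‖v‖/4) t, mul_assoc]
      exact mul_lt_mul_iff_right₀ ht
    have hvC : v ∈ C := by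
      simp only [hC, mem_setOf_eq, real_inner_self_eq_norm_sq]
      nlinarith [hnv]
    set D : Set E := C ∩ closedBall 0 1 with hD
    have hDmeas : MeasurableSet D := hCopen.measurableSet.inter measurableSet_closedBall
    have hDsub : D ⊆ closedBall 0 1 := inter_subset_right
    have hDpos : 0 < μ D := by
      have hop : IsOpen (C ∩ ball 0 1) := hCopen.inter isOpen_ball
      have hne' : (C ∩ ball 0 1).Nonempty := by
        refine ⟨(2 * ‖v‖)⁻¹ • v, ?_, ?_⟩
        · rw [hCcone (by positivity)]; exact hvC
        · rw [mem_ball_zero_iff, norm_smul, Real.norm_eq_abs, abs_of_pos (by positivity)]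
          rw [mul_inv, mul_assoc, inv_mul_cancel₀ hnv.ne']
          norm_num
      calc 0 < μ (C ∩ ball 0 1) := hop.measure_pos μ hne'
        _ ≤ μ D := measure_mono (inter_subset_inter_right _ ball_subset_closedBall)
    have hDfin : μ D < ⊤ :=
      lt_of_le_of_lt (measure_mono hDsub) measure_closedBall_lt_top
    set B := μ (closedBall (0 : E) 1) with hB
    have hBpos : 0 < B := measure_closedBall_pos μ _ one_pos
    have hBfin : B < ⊤ := measure_closedBall_lt_top
    -- the littleO estimate
    have hlo := hdiff.hasFDerivAt.isLittleO
    rw [isLittleO_iff] at hlo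
    have hev := hlo (show (0:ℝ) < ‖v‖/4 by positivity)
    rw [Metric.eventually_nhds_iff] at hev
    obtain ⟨r0, hr0, hball⟩ := hev
    -- main bound
    set c : ℝ≥0∞ := (B - μ D) / B with hc
    have hclt : c < 1 := by
      rw [hc, ENNReal.div_lt_iff (Or.inl hBpos.ne') (Or.inl hBfin.ne), one_mul]
      exact ENNReal.sub_lt_self hBfin.ne hBpos.ne' hDpos.ne'
    have hbound : ∀ r : ℝ, 0 < r → r < r0 →
        μ (S ∩ closedBall x r) / μ (closedBall x r) ≤ c := by
      intro r hr hrr0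
      set T : Set E := (· - x) ⁻¹' (r • D) with hT
      have hTmeas : MeasurableSet T := by
        apply MeasurableSet.preimage (hDmeas.const_smul₀ r) (by fun_prop)
      have hTsub : T ⊆ closedBall x r := by
        intro z hz
        simp only [hT, mem_preimage] at hz
        obtain ⟨w, hwD, hweq⟩ := hz
        have : ‖z - x‖ ≤ r := by
          rw [← hweq, norm_smul, Real.norm_eq_abs, abs_of_pos hr]
          have := mem_closedBall_zero_iff.mp (hDsub hwD)
          nlinarith
        simpa [mem_closedBall, dist_eq_norm] using this
      have hdisj : S ∩ closedBall x r ⊆ closedBall x r \ T := by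
        rintro z ⟨hzS, hzB⟩
        refine ⟨hzB, ?_⟩
        intro hzT
        simp only [hT, mem_preimage] at hzT
        have hzC : z - x ∈ C := by
          obtain ⟨w, hwD, hweq⟩ := hzT
          rw [← hweq, hCcone hr]
          exact hwD.1
        have hdist : dist z x < r0 := by
          rw [dist_eq_norm]
          calc ‖z - x‖ ≤ r := by simpa [mem_closedBall, dist_eq_norm] using hzB
            _ < r0 := hrr0
        have hest := hball hdist
        rw [hf0, hzS.1, hbv] at hest
        simp only [sub_zero, zero_sub, norm_neg, Real.norm_eq_abs] at hest
        have : ⟪v, z - x⟫ ≤ ‖v‖/4 * ‖z - x‖ := le_trans (le_abs_self _) hest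
        exact absurd hzC (by simp only [hC, mem_setOf_eq, not_lt]; exact this)
      have hmT : μ T = ENNReal.ofReal (r ^ Module.finrank ℝ E) * μ D := by
        have h1 : T = (· + (-x)) ⁻¹' (r • D) := by ext z; simp [hT, sub_eq_add_neg]
        rw [h1, measure_preimage_add_right, Measure.addHaar_smul_of_nonneg μ hr.le]
      have hmB : μ (closedBall x r) = ENNReal.ofReal (r ^ Module.finrank ℝ E) * B := by
        rw [Measure.addHaar_closedBall' μ x hr.le]
      have hcb0 : μ (closedBall x r) ≠ 0 := (measure_closedBall_pos μ x hr).ne'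
      have hcbt : μ (closedBall x r) ≠ ⊤ := measure_closedBall_lt_top.ne
      have step : μ (S ∩ closedBall x r) ≤ μ (closedBall x r) - μ T := by
        calc μ (S ∩ closedBall x r) ≤ μ (closedBall x r \ T) := measure_mono hdisj
          _ = μ (closedBall x r) - μ T := by
            rw [measure_diff hTsub hTmeas.nullMeasurableSet]
            exact (lt_of_le_of_lt (measure_mono hTsub) measure_closedBall_lt_top).ne
      rw [ENNReal.div_le_iff hcb0 hcbt]
      calc μ (S ∩ closedBall x r) ≤ μ (closedBall x r) - μ T := step
        _ = ENNReal.ofReal (r ^ Module.finrank ℝ E) * (B - μ D) := by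
            rw [hmB, hmT, ENNReal.mul_sub (fun _ _ => ENNReal.ofReal_ne_top)]
        _ = c * μ (closedBall x r) := by
            rw [hmB, hc]
            conv_rhs => rw [mul_left_comm]
            rw [ENNReal.div_mul_cancel hBpos.ne' hBfin.ne]
    intro htend
    have hev2 : ∀ᶠ r in 𝓝[>] (0:ℝ), c < μ (S ∩ closedBall x r) / μ (closedBall x r) :=
      htend.eventually (eventually_gt_nhds hclt)
    have hev3 : ∀ᶠ r in 𝓝[>] (0:ℝ), μ (S ∩ closedBall x r) / μ (closedBall x r) ≤ c := by
      filter_upwards [Ioo_mem_nhdsGT_of_mem ⟨le_refl (0:ℝ), hr0⟩] with r hr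
      exact hbound r hr.1 hr.2
    obtain ⟨r, h1, h2⟩ := (hev2.and hev3).exists
    exact absurd h1 (not_lt.mpr h2)
  have h2 := Besicovitch.ae_tendsto_measure_inter_div μ S
  rw [Filter.eventually_iff, mem_ae_iff] at h2
  have h3 : S ⊆ {x | Tendsto (fun r => μ (S ∩ closedBall x r) / μ (closedBall x r)) (𝓝[>] 0) (𝓝 1)}ᶜ :=
    fun x hx => key x hx
  calc μ S = μ.restrict S {x | Tendsto (fun r => μ (S ∩ closedBall x r) / μ (closedBall x r)) (𝓝[>] 0) (𝓝 1)}ᶜ :=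
      (Measure.restrict_apply_superset h3).symm
    _ = 0 := h2

end AuxDensity

section AuxMeas

lemma measurable_gradient_param {d : ℕ} (k : EuclideanSpace ℝ (Fin d) → EuclideanSpace ℝ (Fin d) → ℝ)
    (hk_meas : Measurable (Function.uncurry k))
    (hk_diff : ∀ x0, Differentiable ℝ (fun x => k x x0)) (x : EuclideanSpace ℝ (Fin d)) :
    Measurable (fun x0 => gradient (fun x' => k x' x0) x) := by
  have hsec : ∀ z : EuclideanSpace ℝ (Fin d), Measurable (fun x0 => k z x0) := by
    intro z
    exact hk_meas.comp (measurable_const.prodMk measurable_id)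
  refine (MeasurableEquiv.toLp 2 (Fin d → ℝ)).measurable.comp
    (f := fun x0 => WithLp.ofLp (gradient (fun x' => k x' x0) x)) ?_
  rw [measurable_pi_iff]
  intro i
  set v : EuclideanSpace ℝ (Fin d) := EuclideanSpace.single i 1 with hv
  have hcoord : ∀ x0, (gradient (fun x' => k x' x0) x) i
      = fderiv ℝ (fun x' => k x' x0) x v := by
    intro x0
    have h1 : (gradient (fun x' => k x' x0) x) i = ⟪gradient (fun x' => k x' x0) x, v⟫ := by
      rw [hv, EuclideanSpace.inner_single_right]
      simp
    rw [h1, gradient, InnerProductSpace.toDual_symm_apply]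
  simp only [hcoord]
  -- derivative along the line t ↦ x + t • v
  have hslope : ∀ x0, Tendsto (fun n : ℕ => ((n:ℝ)+1) * (k (x + ((n:ℝ)+1)⁻¹ • v) x0 - k x x0))
      atTop (𝓝 (fderiv ℝ (fun x' => k x' x0) x v)) := by
    intro x0
    have hc : HasDerivAt (fun t : ℝ => x + t • v) v 0 := by
      simpa using ((hasDerivAt_id (0:ℝ)).smul_const v).const_add x
    have hcomp : HasDerivAt (fun t : ℝ => k (x + t • v) x0) (fderiv ℝ (fun x' => k x' x0) x v) 0 := by
      have hx : HasFDerivAt (fun x' => k x' x0) (fderiv ℝ (fun x' => k x' x0) x) (x + (0:ℝ) • v) := by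
        simpa using (hk_diff x0).differentiableAt.hasFDerivAt (x := x)
      have := hx.comp_hasDerivAt 0 hc
      exact this
    have hslope := hasDerivAt_iff_tendsto_slope.mp hcomp
    have hseq : Tendsto (fun n : ℕ => ((n:ℝ)+1)⁻¹) atTop (𝓝[≠] (0:ℝ)) := by
      apply tendsto_nhdsWithin_of_tendsto_nhds_of_eventually_within
      · exact tendsto_one_div_add_atTop_nhds_zero_nat.congr (by intro n; simp [one_div])
      · filter_upwards with n
        simp only [Set.mem_compl_iff, Set.mem_singleton_iff]
        positivity
    have := hslope.comp hseq
    refine this.congr ?_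
    intro n
    simp only [Function.comp_apply, slope_def_field]
    rw [sub_zero, div_eq_mul_inv, inv_inv, mul_comm]
    rw [zero_smul, add_zero]
  apply measurable_of_tendsto_metrizable (f := fun n x0 => ((n:ℝ)+1) * (k (x + ((n:ℝ)+1)⁻¹ • v) x0 - k x x0))
  · intro n
    exact measurable_const.mul ((hsec _).sub (hsec _))
  · rw [tendsto_pi_nhds]; exact hslope

end AuxMeas

section AuxPoint

section helpers
variable {F : Type*} [NormedAddCommGroup F] [InnerProductSpace ℝ F] [CompleteSpace F]

lemma gradient_log_comp (f : F → ℝ) (x : F) (hf : DifferentiableAt ℝ f x) (h0 : f x ≠ 0) :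
    gradient (fun x' => Real.log (f x')) x = (f x)⁻¹ • gradient f x := by
  have h := (Real.hasDerivAt_log h0).comp_hasFDerivAt x hf.hasFDerivAt
  have h2 : fderiv ℝ (fun x' => Real.log (f x')) x = (f x)⁻¹ • fderiv ℝ f x := h.fderiv
  rw [gradient, gradient, h2]
  simp

lemma gradient_inner_apply (f : F → ℝ) (x v : F) :
    ⟪gradient f x, v⟫ = fderiv ℝ f x v := by
  rw [gradient, InnerProductSpace.toDual_symm_apply]

end helpers

lemma pointwise_identity {d : ℕ}
    (k : EuclideanSpace ℝ (Fin d) → EuclideanSpace ℝ (Fin d) → ℝ)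
    (hk_meas : Measurable (Function.uncurry k))
    (hk_pos : ∀ x x0, 0 < k x x0)
    (hk_diff : ∀ x0, Differentiable ℝ (fun x => k x x0))
    (ρ : EuclideanSpace ℝ (Fin d) → ℝ)
    (hρ_meas : Measurable ρ) (hρ_pos : ∀ x0, 0 < ρ x0)
    (q : EuclideanSpace ℝ (Fin d) → ℝ)
    (hq_def : ∀ x', q x' = ∫ x0, k x' x0 * ρ x0)
    (x : EuclideanSpace ℝ (Fin d))
    (hq_grad : gradient q x = ∫ x0, ρ x0 • gradient (fun x' => k x' x0) x)
    (a b : EuclideanSpace ℝ (Fin d))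
    (hbdef : b = gradient (fun x' => Real.log (q x')) x)
    (hIa : Integrable (fun x0 => ‖gradient (fun x' => Real.log (k x' x0)) x - a‖ ^ 2 * (k x x0 * ρ x0)))
    (hIb : Integrable (fun x0 => ‖gradient (fun x' => Real.log (k x' x0)) x - b‖ ^ 2 * (k x x0 * ρ x0)))
    (hnotbad : ¬(Real.log (q x) = 0 ∧ DifferentiableAt ℝ (fun x' => Real.log (q x')) x ∧
        fderiv ℝ (fun x' => Real.log (q x')) x ≠ 0)) :
    (∫ x0, ‖gradient (fun x' => Real.log (k x' x0)) x - a‖ ^ 2 * (k x x0 * ρ x0))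
      = (∫ x0, ‖gradient (fun x' => Real.log (k x' x0)) x - b‖ ^ 2 * (k x x0 * ρ x0))
        + ‖b - a‖ ^ 2 * q x := by
  by_cases hab : a = b
  · subst hab; simp
  -- notation
  set g : EuclideanSpace ℝ (Fin d) → EuclideanSpace ℝ (Fin d) :=
    fun x0 => gradient (fun x' => Real.log (k x' x0)) x with hg
  set G : EuclideanSpace ℝ (Fin d) → EuclideanSpace ℝ (Fin d) :=
    fun x0 => gradient (fun x' => k x' x0) x with hG
  set w : EuclideanSpace ℝ (Fin d) → ℝ := fun x0 => k x x0 * ρ x0 with hw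
  set c : EuclideanSpace ℝ (Fin d) := b - a with hc
  have hc0 : c ≠ 0 := sub_ne_zero.mpr (Ne.symm hab)
  have hnc : 0 < ‖c‖ := norm_pos_iff.mpr hc0
  have hwpos : ∀ x0, 0 < w x0 := fun x0 => mul_pos (hk_pos x x0) (hρ_pos x0)
  have hksec : ∀ z, Measurable (fun x0 => k z x0) :=
    fun z => hk_meas.comp (measurable_const.prodMk measurable_id)
  have hwmeas : Measurable w := (hksec x).mul hρ_meas
  -- relation between g and G
  have hgG : ∀ x0, g x0 = (k x x0)⁻¹ • G x0 := by
    intro x0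
    exact gradient_log_comp (fun x' => k x' x0) x ((hk_diff x0).differentiableAt) (hk_pos x x0).ne'
  -- integrability of w
  have hw_int : Integrable w := by
    apply Integrable.mono' (((hIa.add hIb).const_mul (2 / ‖c‖^2)))
      hwmeas.aestronglyMeasurable
    filter_upwards with x0
    rw [Real.norm_eq_abs, abs_of_pos (hwpos x0)]
    simp only [Pi.add_apply]
    have h1 : ‖c‖ ≤ ‖g x0 - a‖ + ‖g x0 - b‖ := by
      have : c = (g x0 - a) - (g x0 - b) := by rw [hc]; abel
      rw [this]
      exact norm_sub_le _ _
    have h2 : ‖c‖^2 ≤ 2 * ‖g x0 - a‖^2 + 2 * ‖g x0 - b‖^2 := by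
      nlinarith [mul_self_le_mul_self (norm_nonneg c) h1,
        sq_nonneg (‖g x0 - a‖ - ‖g x0 - b‖)]
    have h3 := (hwpos x0).le
    rw [div_mul_eq_mul_div, le_div_iff₀ (by positivity)]
    have h6 := mul_le_mul_of_nonneg_right h2 h3
    show w x0 * ‖c‖ ^ 2 ≤ 2 * (‖g x0 - a‖ ^ 2 * w x0 + ‖g x0 - b‖ ^ 2 * w x0)
    nlinarith [h6]
  -- positivity of q x
  have hq_pos : 0 < q x := by
    rw [hq_def]
    rw [integral_pos_iff_support_of_nonneg (fun x0 => (hwpos x0).le) hw_int]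
    have : Function.support w = Set.univ := by
      ext z; simp [Function.mem_support, (hwpos z).ne']
    rw [this]
    calc (0:ENNReal) < volume (Metric.ball (0 : EuclideanSpace ℝ (Fin d)) 1) :=
          Metric.measure_ball_pos _ _ one_pos
      _ ≤ volume Set.univ := measure_mono (Set.subset_univ _)
  -- integrability of V
  set V : EuclideanSpace ℝ (Fin d) → EuclideanSpace ℝ (Fin d) := fun x0 => ρ x0 • G x0 with hV
  have hGmeas : Measurable G :=
    measurable_gradient_param k hk_meas hk_diff x
  have hVmeas : Measurable V := hρ_meas.smul hGmeas
  have hV_int : Integrable V := by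
    apply Integrable.mono' (g := fun x0 => ((1 + ‖g x0 - b‖^2)/2 + ‖b‖) * w x0)
    · have e1 : (fun x0 => ((1 + ‖g x0 - b‖^2)/2 + ‖b‖) * w x0)
          = fun x0 => (1/2 + ‖b‖) * w x0 + (1/2) * (‖g x0 - b‖^2 * w x0) := by
        funext x0; ring
      rw [e1]
      exact (hw_int.const_mul _).add (hIb.const_mul _)
    · exact hVmeas.aestronglyMeasurable
    · filter_upwards with x0
      have hGg : ‖G x0‖ = k x x0 * ‖g x0‖ := by
        rw [hgG x0, norm_smul, Real.norm_eq_abs, abs_of_pos (inv_pos.mpr (hk_pos x x0)),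
          ← mul_assoc, mul_inv_cancel₀ (hk_pos x x0).ne', one_mul]
      have : ‖V x0‖ = ‖g x0‖ * w x0 := by
        rw [hV, norm_smul, Real.norm_eq_abs, abs_of_pos (hρ_pos x0), hGg, hw]
        ring
      rw [this]
      have h4 : ‖g x0‖ ≤ ‖g x0 - b‖ + ‖b‖ := by
        calc ‖g x0‖ = ‖(g x0 - b) + b‖ := by rw [sub_add_cancel]
          _ ≤ ‖g x0 - b‖ + ‖b‖ := norm_add_le _ _
      have h5 : ‖g x0 - b‖ ≤ (1 + ‖g x0 - b‖^2)/2 := by nlinarith [sq_nonneg (‖g x0 - b‖ - 1)]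
      have := (hwpos x0).le
      nlinarith [norm_nonneg (g x0), norm_nonneg b, norm_nonneg (g x0 - b)]
  -- the difference integral
  have hsub : (∫ x0, ‖g x0 - a‖^2 * w x0) - (∫ x0, ‖g x0 - b‖^2 * w x0)
      = ∫ x0, (‖g x0 - a‖^2 * w x0 - ‖g x0 - b‖^2 * w x0) := (integral_sub hIa hIb).symm
  have hFeq : ∀ x0, ‖g x0 - a‖^2 * w x0 - ‖g x0 - b‖^2 * w x0
      = 2 * ⟪c, V x0⟫ + (‖a‖^2 - ‖b‖^2) * w x0 := by
    intro x0
    have e1 : ‖g x0 - a‖^2 = ‖g x0‖^2 - 2 * ⟪g x0, a⟫ + ‖a‖^2 := norm_sub_sq_real _ _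
    have e2 : ‖g x0 - b‖^2 = ‖g x0‖^2 - 2 * ⟪g x0, b⟫ + ‖b‖^2 := norm_sub_sq_real _ _
    have e3 : ⟪c, V x0⟫ = ⟪g x0, c⟫ * w x0 := by
      rw [hV, real_inner_smul_right, hgG x0, real_inner_smul_left, real_inner_comm]
      show ρ x0 * ⟪G x0, c⟫ = (k x x0)⁻¹ * ⟪G x0, c⟫ * (k x x0 * ρ x0)
      rw [inv_mul_eq_div, div_mul_eq_mul_div, eq_div_iff (hk_pos x x0).ne']
      ring
    rw [e3, e1, e2, hc, inner_sub_right]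
    ring
  have hIF1 : Integrable (fun x0 => 2 * ⟪c, V x0⟫) := (hV_int.const_inner c).const_mul 2
  have hIF2 : Integrable (fun x0 => (‖a‖^2 - ‖b‖^2) * w x0) := hw_int.const_mul _
  have hintF : (∫ x0, (‖g x0 - a‖^2 * w x0 - ‖g x0 - b‖^2 * w x0))
      = 2 * ⟪c, ∫ x0, V x0⟫ + (‖a‖^2 - ‖b‖^2) * q x := by
    rw [integral_congr_ae (Eventually.of_forall hFeq), integral_add hIF1 hIF2,
      integral_const_mul, integral_const_mul, integral_inner hV_int, hq_def]
  -- the key vector identity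
  have hkey : ⟪c, gradient q x⟫ = ⟪c, b⟫ * q x := by
    by_cases hdq : DifferentiableAt ℝ q x
    · have hb' : b = (q x)⁻¹ • gradient q x := by
        rw [hbdef, gradient_log_comp q x hdq hq_pos.ne']
      rw [hb', real_inner_smul_right]
      field_simp
    · have h0 : gradient q x = 0 := gradient_eq_zero_of_not_differentiableAt hdq
      have hb0 : b = 0 := by
        by_cases hdL : DifferentiableAt ℝ (fun x' => Real.log (q x')) x
        · by_cases hfd : fderiv ℝ (fun x' => Real.log (q x')) x = 0
          · rw [hbdef, gradient, hfd, map_zero]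
          · exfalso
            have hLx : Real.log (q x) ≠ 0 := fun h => hnotbad ⟨h, hdL, hfd⟩
            apply hdq
            have hcont : ContinuousAt (fun x' => Real.log (q x')) x := hdL.continuousAt
            have hev : ∀ᶠ x' in 𝓝 x, Real.log (q x') ≠ 0 :=
              hcont.eventually_ne hLx
            have hqnn : ∀ x', 0 ≤ q x' := by
              intro x'
              rw [hq_def x']
              exact integral_nonneg fun x0 => (mul_pos (hk_pos x' x0) (hρ_pos x0)).le
            have heq : (fun x' => Real.exp (Real.log (q x'))) =ᶠ[𝓝 x] q := by
              filter_upwards [hev] with x' hx'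
              have hqpos : 0 < q x' := by
                rcases (hqnn x').eq_or_lt with h | h
                · exact absurd (by rw [← h, Real.log_zero]) hx'
                · exact h
              exact Real.exp_log hqpos
            have hde : DifferentiableAt ℝ (fun x' => Real.exp (Real.log (q x'))) x :=
              (Real.differentiable_exp _).comp x hdL
            exact hde.congr_of_eventuallyEq heq.symm
        · rw [hbdef, gradient_eq_zero_of_not_differentiableAt hdL]
      rw [h0, hb0]
      simp
  -- conclude
  have hfinal : (∫ x0, ‖g x0 - a‖^2 * w x0) - (∫ x0, ‖g x0 - b‖^2 * w x0) = ‖b - a‖^2 * q x := by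
    rw [hsub, hintF, ← hq_grad, hkey]
    have e4 : ‖b - a‖^2 = ‖b‖^2 - 2 * ⟪b, a⟫ + ‖a‖^2 := norm_sub_sq_real _ _
    have e5 : ⟪c, b⟫ = ‖b‖^2 - ⟪b, a⟫ := by
      rw [hc, inner_sub_left, real_inner_self_eq_norm_sq, real_inner_comm]
    rw [e5, e4]
    ring
  linarith [hfinal]

end AuxPoint


open MeasureTheory

/-- **Pythagorean identity for the conditional denoising loss.** With
`p(x,y) = ∫ k(x,x₀) p₀(x₀,y) dx₀`, `s*(x,y) = ∇_x log p(x,y)`, and all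
integrals finite, for every measurable `s`,
`∭ ‖∇_x log k − s‖² k p₀ = ∭ ‖∇_x log k − s*‖² k p₀ + ∬ ‖s* − s‖² p`;
in particular `s*` minimizes the denoising loss. -/
theorem conditional_denoising_pythagorean
    (d m : ℕ)
    (p0 : EuclideanSpace ℝ (Fin d) → EuclideanSpace ℝ (Fin m) → ℝ)
    (hp0_meas : Measurable (Function.uncurry p0))
    (hp0_pos : ∀ x0 y, 0 < p0 x0 y)
    (hp0_prob : ∫ x0, ∫ y, p0 x0 y = 1)
    (k : EuclideanSpace ℝ (Fin d) → EuclideanSpace ℝ (Fin d) → ℝ)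
    (hk_meas : Measurable (Function.uncurry k))
    (hk_pos : ∀ x x0, 0 < k x x0)
    (hk_prob : ∀ x0, ∫ x, k x x0 = 1)
    (hk_diff : ∀ x0, Differentiable ℝ (fun x => k x x0))
    (p : EuclideanSpace ℝ (Fin d) → EuclideanSpace ℝ (Fin m) → ℝ)
    (hp_def : ∀ x y, p x y = ∫ x0, k x x0 * p0 x0 y)
    (hp_grad : ∀ x y, gradient (fun x' => p x' y) x =
      ∫ x0, p0 x0 y • gradient (fun x' => k x' x0) x)
    (sstar : EuclideanSpace ℝ (Fin d) → EuclideanSpace ℝ (Fin m) → EuclideanSpace ℝ (Fin d))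
    (hsstar : ∀ x y, sstar x y = gradient (fun x' => Real.log (p x' y)) x)
    (s : EuclideanSpace ℝ (Fin d) → EuclideanSpace ℝ (Fin m) → EuclideanSpace ℝ (Fin d))
    (hs_meas : Measurable (Function.uncurry s))
    (hint1 : ∀ r : EuclideanSpace ℝ (Fin d) → EuclideanSpace ℝ (Fin m) → EuclideanSpace ℝ (Fin d),
      r = s ∨ r = sstar → ∀ y x, Integrable (fun x0 =>
        ‖gradient (fun x' => Real.log (k x' x0)) x - r x y‖ ^ 2 * (k x x0 * p0 x0 y)))
    (hint2 : ∀ r : EuclideanSpace ℝ (Fin d) → EuclideanSpace ℝ (Fin m) → EuclideanSpace ℝ (Fin d),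
      r = s ∨ r = sstar → ∀ y, Integrable (fun x => ∫ x0,
        ‖gradient (fun x' => Real.log (k x' x0)) x - r x y‖ ^ 2 * (k x x0 * p0 x0 y)))
    (hint3 : ∀ r : EuclideanSpace ℝ (Fin d) → EuclideanSpace ℝ (Fin m) → EuclideanSpace ℝ (Fin d),
      r = s ∨ r = sstar → Integrable (fun y => ∫ x, ∫ x0,
        ‖gradient (fun x' => Real.log (k x' x0)) x - r x y‖ ^ 2 * (k x x0 * p0 x0 y)))
    (hint4 : ∀ y, Integrable (fun x => ‖sstar x y - s x y‖ ^ 2 * p x y))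
    (hint5 : Integrable (fun y => ∫ x, ‖sstar x y - s x y‖ ^ 2 * p x y)) :
    (∫ y, ∫ x, ∫ x0,
        ‖gradient (fun x' => Real.log (k x' x0)) x - s x y‖ ^ 2 * (k x x0 * p0 x0 y)) =
      (∫ y, ∫ x, ∫ x0,
        ‖gradient (fun x' => Real.log (k x' x0)) x - sstar x y‖ ^ 2 * (k x x0 * p0 x0 y)) +
      (∫ y, ∫ x, ‖sstar x y - s x y‖ ^ 2 * p x y) ∧
    (∫ y, ∫ x, ∫ x0,
        ‖gradient (fun x' => Real.log (k x' x0)) x - sstar x y‖ ^ 2 * (k x x0 * p0 x0 y)) ≤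
      (∫ y, ∫ x, ∫ x0,
        ‖gradient (fun x' => Real.log (k x' x0)) x - s x y‖ ^ 2 * (k x x0 * p0 x0 y)) := by
  have hp0sec : ∀ y, Measurable fun x0 => p0 x0 y :=
    fun y => hp0_meas.comp (measurable_id.prodMk measurable_const)
  have hq_nonneg : ∀ x y, 0 ≤ p x y := by
    intro x y
    rw [hp_def]
    exact integral_nonneg fun x0 => (mul_pos (hk_pos x x0) (hp0_pos x0 y)).le
  have key : ∀ y,
      (∫ x, ∫ x0, ‖gradient (fun x' => Real.log (k x' x0)) x - s x y‖ ^ 2 * (k x x0 * p0 x0 y))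
        = (∫ x, ∫ x0,
            ‖gradient (fun x' => Real.log (k x' x0)) x - sstar x y‖ ^ 2 * (k x x0 * p0 x0 y))
          + ∫ x, ‖sstar x y - s x y‖ ^ 2 * p x y := by
    intro y
    have hbad := levelset_fderiv_ae_zero (volume) (fun x' => Real.log (p x' y))
    have hae0 : ∀ᵐ x : EuclideanSpace ℝ (Fin d),
        x ∉ {x | Real.log (p x y) = 0 ∧
          DifferentiableAt ℝ (fun x' => Real.log (p x' y)) x ∧
          fderiv ℝ (fun x' => Real.log (p x' y)) x ≠ 0} :=
      measure_eq_zero_iff_ae_notMem.mp hbad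
    have hae : ∀ᵐ x : EuclideanSpace ℝ (Fin d),
        (∫ x0, ‖gradient (fun x' => Real.log (k x' x0)) x - s x y‖ ^ 2 * (k x x0 * p0 x0 y))
          = (∫ x0,
              ‖gradient (fun x' => Real.log (k x' x0)) x - sstar x y‖ ^ 2 * (k x x0 * p0 x0 y))
            + ‖sstar x y - s x y‖ ^ 2 * p x y := by
      filter_upwards [hae0] with x hx
      exact pointwise_identity k hk_meas hk_pos hk_diff (fun x0 => p0 x0 y) (hp0sec y)
        (fun x0 => hp0_pos x0 y) (fun x' => p x' y) (fun x' => hp_def x' y) x (hp_grad x y)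
        (s x y) (sstar x y) (hsstar x y) (hint1 s (Or.inl rfl) y x) (hint1 sstar (Or.inr rfl) y x)
        (fun h => hx h)
    calc (∫ x, ∫ x0,
          ‖gradient (fun x' => Real.log (k x' x0)) x - s x y‖ ^ 2 * (k x x0 * p0 x0 y))
        = ∫ x, ((∫ x0,
            ‖gradient (fun x' => Real.log (k x' x0)) x - sstar x y‖ ^ 2 * (k x x0 * p0 x0 y))
          + ‖sstar x y - s x y‖ ^ 2 * p x y) := integral_congr_ae hae
      _ = (∫ x, ∫ x0,
            ‖gradient (fun x' => Real.log (k x' x0)) x - sstar x y‖ ^ 2 * (k x x0 * p0 x0 y))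
          + ∫ x, ‖sstar x y - s x y‖ ^ 2 * p x y :=
        integral_add (hint2 sstar (Or.inr rfl) y) (hint4 y)
  have hmain :
      (∫ y, ∫ x, ∫ x0,
          ‖gradient (fun x' => Real.log (k x' x0)) x - s x y‖ ^ 2 * (k x x0 * p0 x0 y)) =
        (∫ y, ∫ x, ∫ x0,
          ‖gradient (fun x' => Real.log (k x' x0)) x - sstar x y‖ ^ 2 * (k x x0 * p0 x0 y)) +
        (∫ y, ∫ x, ‖sstar x y - s x y‖ ^ 2 * p x y) := by
    calc (∫ y, ∫ x, ∫ x0,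
          ‖gradient (fun x' => Real.log (k x' x0)) x - s x y‖ ^ 2 * (k x x0 * p0 x0 y))
        = ∫ y, ((∫ x, ∫ x0,
            ‖gradient (fun x' => Real.log (k x' x0)) x - sstar x y‖ ^ 2 * (k x x0 * p0 x0 y))
          + ∫ x, ‖sstar x y - s x y‖ ^ 2 * p x y) := by
          apply integral_congr_ae
          filter_upwards with y
          exact key y
      _ = _ := integral_add (hint3 sstar (Or.inr rfl)) hint5
  refine ⟨hmain, ?_⟩
  have hB : 0 ≤ ∫ y, ∫ x, ‖sstar x y - s x y‖ ^ 2 * p x y :=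
    integral_nonneg fun y => integral_nonneg fun x =>
      mul_nonneg (by positivity) (hq_nonneg x y)
  linarith [hmain, hB]
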